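/- There exists a constant C > 0 such that for every integer n ≥ 3 and every sequence 𝒢 = (G_1, G_2, …) of communication graphs on n nodes in which every G_t is rooted (i.e., contains a rooted spanning tree: there is a node from which every node is reachable by a directed path in G_t), the dynamic radius of 𝒢 is at most C·n·log log n; that is, some node is a broadcaster in G_1 ∘ ⋯ ∘ G_t for some t ≤ C·n·log log n. -/

import Mathlib

/-- `prodUpTo G t` is the product graph `G_1 ∘ G_2 ∘ ⋯ ∘ G_t`, where `G_r` is `G (r-1)`
(0-indexed sequence); the empty product (`t = 0`) has exactly the self-loops. -/
def prodUpTo {n : ℕ} (G : ℕ → Fin n → Fin n → Prop) : ℕ → Fin n → Fin n → Prop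
  | 0, i, j => i = j
  | t + 1, i, j => ∃ k, prodUpTo G t i k ∧ G t k j


namespace RootedRadiusAux

open Finset

variable {n : ℕ}

/-- paths through the window `G t ∘ G (t+1) ∘ ⋯ ∘ G (t+L-1)`. -/
def winProd (G : ℕ → Fin n → Fin n → Prop) : ℕ → ℕ → Fin n → Fin n → Prop
  | _, 0, k, j => k = j
  | t, L + 1, k, j => ∃ m, G t k m ∧ winProd G (t + 1) L m j

lemma winProd_snoc (G : ℕ → Fin n → Fin n → Prop) (L : ℕ) :
    ∀ (t : ℕ) (k j : Fin n),
      winProd G t (L + 1) k j ↔ ∃ m, winProd G t L k m ∧ G (t + L) m j := by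
  induction L with
  | zero =>
      intro t k j
      simp [winProd]
  | succ L ih =>
      intro t k j
      constructor
      · rintro ⟨m₁, h₁, h₂⟩
        rw [ih] at h₂
        obtain ⟨m, hm, he⟩ := h₂
        exact ⟨m, ⟨m₁, h₁, hm⟩, by rwa [show t + 1 + L = t + (L + 1) by omega] at he⟩
      · rintro ⟨m, ⟨m₁, h₁, hm⟩, he⟩
        refine ⟨m₁, h₁, ?_⟩
        rw [ih]
        exact ⟨m, hm, by rwa [show t + 1 + L = t + (L + 1) by omega]⟩

lemma prodUpTo_add (G : ℕ → Fin n → Fin n → Prop) (L : ℕ) :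
    ∀ (t : ℕ) (x j : Fin n),
      prodUpTo G (t + L) x j ↔ ∃ k, prodUpTo G t x k ∧ winProd G t L k j := by
  induction L with
  | zero => intro t x j; simp [winProd]
  | succ L ih =>
      intro t x j
      show (∃ m, prodUpTo G (t + L) x m ∧ G (t + L) m j) ↔ _
      constructor
      · rintro ⟨m, hm, he⟩
        rw [ih] at hm
        obtain ⟨k, hk, hw⟩ := hm
        exact ⟨k, hk, (winProd_snoc G L t k j).2 ⟨m, hw, he⟩⟩
      · rintro ⟨k, hk, hw⟩
        rw [winProd_snoc] at hw
        obtain ⟨m, hm, he⟩ := hw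
        exact ⟨m, (ih t x m).2 ⟨k, hk, hm⟩, he⟩

lemma winProd_refl (G : ℕ → Fin n → Fin n → Prop) (hloop : ∀ t i, G t i i) (L : ℕ) :
    ∀ t (j : Fin n), winProd G t L j j := by
  induction L with
  | zero => intro t j; rfl
  | succ L ih => intro t j; exact ⟨j, hloop t j, ih (t + 1) j⟩

noncomputable def inSet (G : ℕ → Fin n → Fin n → Prop) (t L : ℕ) (j : Fin n) :
    Finset (Fin n) :=
  @Finset.filter _ (fun k => winProd G t L k j) (Classical.decPred _) Finset.univ

lemma mem_inSet {G : ℕ → Fin n → Fin n → Prop} {t L : ℕ} {j k : Fin n} :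
    k ∈ inSet G t L j ↔ winProd G t L k j := by
  simp [inSet]

lemma inSet_zero (G : ℕ → Fin n → Fin n → Prop) (t : ℕ) (j : Fin n) :
    inSet G t 0 j = {j} := by
  ext k; simp [mem_inSet, winProd]

lemma inSet_succ_supset (G : ℕ → Fin n → Fin n → Prop) (hloop : ∀ t i, G t i i)
    (t L : ℕ) (j : Fin n) : inSet G (t + 1) L j ⊆ inSet G t (L + 1) j := by
  intro k hk
  rw [mem_inSet] at hk ⊢
  exact ⟨k, hloop t k, hk⟩

lemma pigeonhole (I : Finset (Fin n)) (A : Fin n → Finset ℕ)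
    (hsub : ∀ i, A i ⊆ Finset.range (2 * n))
    (hbig : ∀ i ∈ I, n + 1 ≤ (A i).card)
    (hne : I.Nonempty) :
    ∃ a ∈ Finset.range (2 * n),
      I.card < 2 * (I.filter (fun i => a ∈ A i)).card := by
  classical
  have key : ∑ a ∈ Finset.range (2 * n), (I.filter (fun i => a ∈ A i)).card
      = ∑ i ∈ I, (A i).card := by
    simp only [Finset.card_filter]
    rw [Finset.sum_comm]
    refine Finset.sum_congr rfl (fun i _ => ?_)
    rw [← Finset.card_filter, Finset.filter_mem_eq_inter,
      Finset.inter_eq_right.mpr (hsub i)]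
  have hge : (n + 1) * I.card ≤
      ∑ a ∈ Finset.range (2 * n), (I.filter (fun i => a ∈ A i)).card := by
    rw [key]
    calc (n + 1) * I.card = ∑ _i ∈ I, (n + 1) := by
          rw [Finset.sum_const, smul_eq_mul, mul_comm]
      _ ≤ ∑ i ∈ I, (A i).card := Finset.sum_le_sum hbig
  by_contra hcon
  push_neg at hcon
  have h2 : 2 * ∑ a ∈ Finset.range (2 * n), (I.filter (fun i => a ∈ A i)).card
      ≤ 2 * n * I.card := by
    rw [Finset.mul_sum]
    calc ∑ a ∈ Finset.range (2 * n), 2 * (I.filter (fun i => a ∈ A i)).card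
        ≤ ∑ _a ∈ Finset.range (2 * n), I.card :=
          Finset.sum_le_sum (fun a ha => hcon a ha)
      _ = 2 * n * I.card := by rw [Finset.sum_const, Finset.card_range, smul_eq_mul]
  have hpos : 0 < I.card := Finset.card_pos.2 hne
  nlinarith [hge, h2, hpos]

/-- Greedy set cover: if each `A i` is a subset of `range (2n)` of size ≥ `n+1`
(more than half), then any `2^(m+1)` many of them admit a transversal of size `≤ m+1`. -/
lemma cover_lemma :
    ∀ (m : ℕ) (I : Finset (Fin n)) (A : Fin n → Finset ℕ),
      (∀ i, A i ⊆ Finset.range (2 * n)) →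
      (∀ i ∈ I, n + 1 ≤ (A i).card) →
      I.card ≤ 2 ^ (m + 1) →
      ∃ B : Finset ℕ, B.card ≤ m + 1 ∧ ∀ i ∈ I, ∃ a ∈ B, a ∈ A i := by
  intro m
  induction m with
  | zero =>
      intro I A hsub hbig hcard
      rcases I.eq_empty_or_nonempty with h | h
      · exact ⟨∅, by simp, by simp [h]⟩
      · classical
        obtain ⟨a, _, ha⟩ := pigeonhole I A hsub hbig h
        have hsplit := Finset.card_filter_add_card_filter_not
          (s := I) (p := fun i => a ∈ A i)
        have hI' : (I.filter (fun i => ¬ a ∈ A i)).card = 0 := by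
          norm_num at hcard
          omega
        have hI'e : I.filter (fun i => ¬ a ∈ A i) = ∅ := Finset.card_eq_zero.mp hI'
        refine ⟨{a}, by simp, fun i hi => ?_⟩
        refine ⟨a, Finset.mem_singleton_self a, ?_⟩
        by_contra hai
        have : i ∈ I.filter (fun i => ¬ a ∈ A i) := Finset.mem_filter.2 ⟨hi, hai⟩
        rw [hI'e] at this
        exact absurd this (Finset.notMem_empty i)
  | succ m ih =>
      intro I A hsub hbig hcard
      rcases I.eq_empty_or_nonempty with h | h
      · exact ⟨∅, by simp, by simp [h]⟩
      · classical
        obtain ⟨a, _, ha⟩ := pigeonhole I A hsub hbig h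
        have hsplit := Finset.card_filter_add_card_filter_not
          (s := I) (p := fun i => a ∈ A i)
        have hpow : (2:ℕ) ^ (m + 1 + 1) = 2 * 2 ^ (m + 1) := by ring
        have hI' : (I.filter (fun i => ¬ a ∈ A i)).card ≤ 2 ^ (m + 1) := by omega
        obtain ⟨B', hB'c, hB'cov⟩ := ih (I.filter (fun i => ¬ a ∈ A i)) A hsub
          (fun i hi => hbig i (Finset.mem_filter.1 hi).1) hI'
        refine ⟨insert a B', ?_, fun i hi => ?_⟩
        · calc (insert a B').card ≤ B'.card + 1 := Finset.card_insert_le a B'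
            _ ≤ m + 1 + 1 := by omega
        · by_cases hai : a ∈ A i
          · exact ⟨a, Finset.mem_insert_self a B', hai⟩
          · obtain ⟨b, hb, hbi⟩ := hB'cov i (Finset.mem_filter.2 ⟨hi, hai⟩)
            exact ⟨b, Finset.mem_insert_of_mem hb, hbi⟩


variable {G : ℕ → Fin n → Fin n → Prop}

/-- In a window of `2n` rooted rounds, for every `j` at least `n+1` of the rounds have
their root inside the final in-set of `j`. -/
lemma roots_dense (hn : 3 ≤ n) (hloop : ∀ t i, G t i i)
    (rt : ℕ → Fin n) (hrt : ∀ s v, Relation.ReflTransGen (G s) (rt s) v)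
    (t : ℕ) (j : Fin n) :
    n + 1 ≤ ((Finset.range (2 * n)).filter
      (fun a => rt (t + a) ∈ inSet G t (2 * n) j)).card := by
  classical
  set S : ℕ → Finset (Fin n) := fun a => inSet G (t + a) (2 * n - a) j with hS
  have hsub : ∀ a < 2 * n, S (a + 1) ⊆ S a := by
    intro a ha k hk
    have h2n : 2 * n - a = (2 * n - (a + 1)) + 1 := by omega
    show k ∈ inSet G (t + a) (2 * n - a) j
    rw [h2n]
    exact inSet_succ_supset G hloop (t + a) (2 * n - (a + 1)) j hk
  have hmem : ∀ a, j ∈ S a := fun a => mem_inSet.2 (winProd_refl G hloop _ _ _)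
  have hsub0 : ∀ a ≤ 2 * n, S a ⊆ S 0 := by
    intro a
    induction a with
    | zero => intro _; exact subset_rfl
    | succ a ih =>
        intro ha
        exact (hsub a (by omega)).trans (ih (by omega))
  have hcard0 : (S 0).card ≤ n := by
    calc (S 0).card ≤ (Finset.univ : Finset (Fin n)).card := Finset.card_le_univ _
      _ = n := by simp
  have hcard2n : (S (2 * n)).card = 1 := by
    have : S (2 * n) = {j} := by
      show inSet G (t + 2 * n) (2 * n - 2 * n) j = {j}
      rw [Nat.sub_self]
      exact inSet_zero G _ j
    rw [this, Finset.card_singleton]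
  -- number of strict-growth rounds is at most n - 1
  set D : Finset ℕ := (Finset.range (2 * n)).filter
    (fun a => (S (a + 1)).card < (S a).card) with hD
  have hDcard : D.card ≤ n - 1 := by
    have htel : ∑ a ∈ Finset.range (2 * n),
        (((S a).card : ℤ) - ((S (a + 1)).card : ℤ)) = ((S 0).card : ℤ) - ((S (2 * n)).card : ℤ) :=
      Finset.sum_range_sub' (fun a => ((S a).card : ℤ)) (2 * n)
    have hone : ∀ a ∈ D, (1 : ℤ) ≤ ((S a).card : ℤ) - ((S (a + 1)).card : ℤ) := by
      intro a ha
      have := (Finset.mem_filter.1 ha).2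
      omega
    have hnonneg : ∀ a ∈ Finset.range (2 * n), a ∉ D →
        (0 : ℤ) ≤ ((S a).card : ℤ) - ((S (a + 1)).card : ℤ) := by
      intro a ha _
      have h1 : (S (a + 1)).card ≤ (S a).card :=
        Finset.card_le_card (hsub a (Finset.mem_range.1 ha))
      omega
    have hDsub : D ⊆ Finset.range (2 * n) := Finset.filter_subset _ _
    have h1 : (D.card : ℤ) ≤ ∑ a ∈ D, (((S a).card : ℤ) - ((S (a + 1)).card : ℤ)) := by
      calc (D.card : ℤ) = ∑ _a ∈ D, (1 : ℤ) := by simp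
        _ ≤ _ := Finset.sum_le_sum hone
    have h2 : ∑ a ∈ D, (((S a).card : ℤ) - ((S (a + 1)).card : ℤ))
        ≤ ∑ a ∈ Finset.range (2 * n), (((S a).card : ℤ) - ((S (a + 1)).card : ℤ)) :=
      Finset.sum_le_sum_of_subset_of_nonneg hDsub hnonneg
    have := htel ▸ (h1.trans h2)
    omega
  -- non-growth rounds: root is in S (a+1) ⊆ S 0
  have hroot_in : ∀ a ∈ Finset.range (2 * n), a ∉ D → rt (t + a) ∈ inSet G t (2 * n) j := by
    intro a har haD
    have ha : a < 2 * n := Finset.mem_range.1 har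
    have hnlt : ¬ (S (a + 1)).card < (S a).card := by
      intro hlt
      exact haD (Finset.mem_filter.2 ⟨har, hlt⟩)
    have heq : S (a + 1) = S a :=
      Finset.eq_of_subset_of_card_le (hsub a ha) (by omega)
    have hclose : ∀ u v, G (t + a) u v → v ∈ S (a + 1) → u ∈ S (a + 1) := by
      intro u v huv hv
      rw [heq]
      show u ∈ inSet G (t + a) (2 * n - a) j
      have h2n : 2 * n - a = (2 * n - (a + 1)) + 1 := by omega
      rw [h2n, mem_inSet]
      exact ⟨v, huv, mem_inSet.1 hv⟩
    have hrin' : ∀ u, Relation.ReflTransGen (G (t + a)) u j → u ∈ S (a + 1) := by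
      intro u h
      induction h using Relation.ReflTransGen.head_induction_on with
      | refl => exact hmem (a + 1)
      | head huv _ ih => exact hclose _ _ huv ih
    have hrin : rt (t + a) ∈ S (a + 1) := hrin' _ (hrt (t + a) j)
    have : rt (t + a) ∈ S 0 := hsub0 (a + 1) (by omega) hrin
    exact this
  have hsubE : (Finset.range (2 * n)).filter (fun a => a ∉ D) ⊆
      (Finset.range (2 * n)).filter (fun a => rt (t + a) ∈ inSet G t (2 * n) j) := by
    intro a ha
    obtain ⟨har, haD⟩ := Finset.mem_filter.1 ha
    exact Finset.mem_filter.2 ⟨har, hroot_in a har haD⟩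
  have hEcard : n + 1 ≤ ((Finset.range (2 * n)).filter (fun a => a ∉ D)).card := by
    have hsplit : ((Finset.range (2 * n)).filter (fun a => a ∈ D)).card +
        ((Finset.range (2 * n)).filter (fun a => a ∉ D)).card = 2 * n := by
      rw [Finset.card_filter_add_card_filter_not, Finset.card_range]
    have hDin : (Finset.range (2 * n)).filter (fun a => a ∈ D) = D := by
      rw [Finset.filter_mem_eq_inter, Finset.inter_eq_right.mpr (Finset.filter_subset _ _)]
    rw [hDin] at hsplit
    omega
  exact hEcard.trans (Finset.card_le_card hsubE)

/-- Amplification: if any `γ` nodes have a common ancestor at time `t`, then after a window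
of `2n` more rooted rounds, any `2^γ` nodes have a common ancestor. -/
lemma amplify (hn : 3 ≤ n) (hloop : ∀ t i, G t i i)
    (rt : ℕ → Fin n) (hrt : ∀ s v, Relation.ReflTransGen (G s) (rt s) v)
    (γ t : ℕ) (hγ : 1 ≤ γ)
    (h : ∀ K : Finset (Fin n), K.card ≤ γ → ∃ x, ∀ k ∈ K, prodUpTo G t x k) :
    ∀ K : Finset (Fin n), K.card ≤ 2 ^ γ → ∃ x, ∀ k ∈ K, prodUpTo G (t + 2 * n) x k := by
  classical
  intro K hK
  set A : Fin n → Finset ℕ := fun j =>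
    (Finset.range (2 * n)).filter (fun a => rt (t + a) ∈ inSet G t (2 * n) j) with hA
  have hsubA : ∀ i, A i ⊆ Finset.range (2 * n) := fun i => Finset.filter_subset _ _
  have hbigA : ∀ i ∈ K, n + 1 ≤ (A i).card :=
    fun i _ => roots_dense hn hloop rt hrt t i
  have hKcard : K.card ≤ 2 ^ ((γ - 1) + 1) := by
    rwa [show γ - 1 + 1 = γ by omega]
  obtain ⟨B, hBcard, hBcov⟩ := cover_lemma (γ - 1) K A hsubA hbigA hKcard
  have hK₀ : (B.image (fun a => rt (t + a))).card ≤ γ :=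
    (Finset.card_image_le).trans (by omega)
  obtain ⟨x, hx⟩ := h (B.image (fun a => rt (t + a))) hK₀
  refine ⟨x, fun j hj => ?_⟩
  obtain ⟨a, haB, haA⟩ := hBcov j hj
  have hw : winProd G t (2 * n) (rt (t + a)) j := mem_inSet.1 (Finset.mem_filter.1 haA).2
  have hp : prodUpTo G t x (rt (t + a)) :=
    hx _ (Finset.mem_image_of_mem _ haB)
  exact (prodUpTo_add G (2 * n) t x j).2 ⟨rt (t + a), hp, hw⟩

/-- The tower function: `F 0 = 1`, `F (m+1) = 2 ^ F m`. -/
def F : ℕ → ℕ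
  | 0 => 1
  | m + 1 => 2 ^ (F m)

lemma one_le_F : ∀ m, 1 ≤ F m
  | 0 => le_refl 1
  | m + 1 => Nat.one_le_two_pow

lemma two_pow_two_pow_le_F : ∀ m, 2 ^ 2 ^ m ≤ F (m + 1) := by
  intro m
  induction m with
  | zero => simp [F]
  | succ m ih =>
      have h1 : 2 ^ (m + 1) ≤ 2 ^ 2 ^ m :=
        Nat.pow_le_pow_right (by norm_num) Nat.lt_two_pow_self
      calc (2:ℕ) ^ 2 ^ (m + 1) ≤ 2 ^ 2 ^ 2 ^ m := Nat.pow_le_pow_right (by norm_num) h1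
        _ ≤ 2 ^ (F (m + 1)) := Nat.pow_le_pow_right (by norm_num) ih
        _ = F (m + 2) := rfl

lemma iterate_amplify (hn : 3 ≤ n) (hloop : ∀ t i, G t i i)
    (hroot : ∀ t : ℕ, ∃ r : Fin n, ∀ v : Fin n, Relation.ReflTransGen (G t) r v) :
    ∀ m (K : Finset (Fin n)), K.card ≤ F m → ∃ x, ∀ k ∈ K, prodUpTo G (2 * n * m) x k := by
  classical
  obtain ⟨rt, hrt⟩ : ∃ rt : ℕ → Fin n, ∀ s v, Relation.ReflTransGen (G s) (rt s) v :=
    ⟨fun s => (hroot s).choose, fun s => (hroot s).choose_spec⟩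
  intro m
  induction m with
  | zero =>
      intro K hK
      rcases K.eq_empty_or_nonempty with h | h
      · exact ⟨⟨0, by omega⟩, fun k hk => by simp [h] at hk⟩
      · obtain ⟨k, hk⟩ := h
        refine ⟨k, fun k' hk' => ?_⟩
        have : k = k' := Finset.card_le_one.1 hK k hk k' hk'
        exact this
  | succ m ih =>
      intro K hK
      have h2 := amplify hn hloop rt hrt (F m) (2 * n * m) (one_le_F m) ih
      rw [show 2 * n * (m + 1) = 2 * n * m + 2 * n by ring]
      exact h2 K (by simpa [F] using hK)
end RootedRadiusAux

/-- There exists a constant `C > 0` such that for every `n ≥ 3` and every sequence of rooted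
communication graphs on `n` nodes (each graph has a node from which all nodes are reachable),
some node is a broadcaster in the product of the first `t` graphs for some
`t ≤ C · n · log log n`. -/
theorem rooted_dynamic_radius :
    ∃ C : ℝ, 0 < C ∧
      ∀ n : ℕ, 3 ≤ n →
        ∀ G : ℕ → Fin n → Fin n → Prop,
          (∀ t i, G t i i) →
          (∀ t : ℕ, ∃ r : Fin n, ∀ v : Fin n, Relation.ReflTransGen (G t) r v) →
          ∃ (i : Fin n) (t : ℕ), (t : ℝ) ≤ C * n * Real.log (Real.log n) ∧
            ∀ j : Fin n, prodUpTo G t i j := by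
  refine ⟨1000, by norm_num, ?_⟩
  intro n hn G hloop hroot
  classical
  set c₁ := Nat.clog 2 n with hc₁def
  set c₂ := Nat.clog 2 c₁ with hc₂def
  set M := c₂ + 1 with hMdef
  -- F M ≥ n
  have hnF : n ≤ RootedRadiusAux.F M := by
    calc n ≤ 2 ^ c₁ := Nat.le_pow_clog (by norm_num) n
      _ ≤ 2 ^ 2 ^ c₂ := Nat.pow_le_pow_right (by norm_num)
            (Nat.le_pow_clog (by norm_num) c₁)
      _ ≤ RootedRadiusAux.F (c₂ + 1) := RootedRadiusAux.two_pow_two_pow_le_F c₂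
  obtain ⟨x, hx⟩ := RootedRadiusAux.iterate_amplify hn hloop hroot M Finset.univ
    (by rw [Finset.card_univ, Fintype.card_fin]; exact hnF)
  refine ⟨x, 2 * n * M, ?_, fun j => hx j (Finset.mem_univ j)⟩
  -- numeric bound
  set L := Real.log (Real.log n) with hLdef
  have hlog2 : (0.6931 : ℝ) ≤ Real.log 2 := by
    have := Real.log_two_gt_d9; linarith
  have hlog32 : (1/3 : ℝ) ≤ Real.log (3/2 : ℝ) := by
    have h := Real.log_le_sub_one_of_pos (x := ((3:ℝ)/2)⁻¹) (by norm_num)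
    rw [Real.log_inv] at h
    norm_num at h ⊢
    linarith
  have hlog3 : (1.0264 : ℝ) ≤ Real.log 3 := by
    have h3 : (3:ℝ) = 2 * (3/2) := by norm_num
    rw [h3, Real.log_mul (by norm_num) (by norm_num)]
    linarith
  have hlogn : (1.0264 : ℝ) ≤ Real.log n := by
    have := Real.log_le_log (by norm_num : (0:ℝ) < 3)
      (by exact_mod_cast hn : (3:ℝ) ≤ (n:ℝ))
    linarith
  have hlogn_pos : (0:ℝ) < Real.log n := by linarith
  have hL : (0.025 : ℝ) ≤ L := by
    have h1 : Real.log (1.0264 : ℝ) ≤ L :=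
      Real.log_le_log (by norm_num) hlogn
    have h2 := Real.log_le_sub_one_of_pos (x := ((1.0264:ℝ))⁻¹) (by norm_num)
    rw [Real.log_inv] at h2
    have h3 : (0.025 : ℝ) ≤ 1 - (1.0264:ℝ)⁻¹ := by norm_num
    linarith
  have hc₁2 : 2 ≤ c₁ := by
    have : (1:ℕ) < Nat.clog 2 n := (Nat.lt_clog_iff_pow_lt (by norm_num)).2 (by omega)
    omega
  have hc₂1 : 1 ≤ c₂ := by
    have : (0:ℕ) < Nat.clog 2 c₁ := (Nat.lt_clog_iff_pow_lt (by norm_num)).2 (by omega)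
    omega
  have hp1 : (2:ℕ) ^ (c₁ - 1) < n := by
    have := Nat.pow_pred_clog_lt_self (b := 2) (by norm_num) (x := n) (by omega)
    simpa [Nat.pred_eq_sub_one] using this
  have hp2 : (2:ℕ) ^ (c₂ - 1) < c₁ := by
    have := Nat.pow_pred_clog_lt_self (b := 2) (by norm_num) (x := c₁) (by omega)
    simpa [Nat.pred_eq_sub_one] using this
  -- real versions
  have hr1 : ((c₁ : ℝ) - 1) * Real.log 2 ≤ Real.log n := by
    have hcast : ((2:ℝ)) ^ (c₁ - 1) ≤ (n:ℝ) := by exact_mod_cast hp1.le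
    have hlog := Real.log_le_log (by positivity) hcast
    rw [Real.log_pow] at hlog
    rw [show ((c₁:ℝ) - 1) = ((c₁ - 1 : ℕ) : ℝ) by
      rw [Nat.cast_sub (by omega)]; norm_num]
    exact hlog
  have hr2 : ((c₂ : ℝ) - 1) * Real.log 2 ≤ Real.log c₁ := by
    have hcast : ((2:ℝ)) ^ (c₂ - 1) ≤ (c₁:ℝ) := by exact_mod_cast hp2.le
    have hlog := Real.log_le_log (by positivity) hcast
    rw [Real.log_pow] at hlog
    rw [show ((c₂:ℝ) - 1) = ((c₂ - 1 : ℕ) : ℝ) by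
      rw [Nat.cast_sub (by omega)]; norm_num]
    exact hlog
  have hc₁r : (2:ℝ) ≤ (c₁ : ℝ) := by exact_mod_cast hc₁2
  have hc₂r : (1:ℝ) ≤ (c₂ : ℝ) := by exact_mod_cast hc₂1
  have hr1' : ((c₁ : ℝ) - 1) * 0.6931 ≤ Real.log n := by
    have := mul_le_mul_of_nonneg_left hlog2 (show (0:ℝ) ≤ (c₁:ℝ) - 1 by linarith)
    linarith
  have hc₁le : (c₁ : ℝ) ≤ 2.45 * Real.log n := by linarith
  have hlogc₁ : Real.log (c₁ : ℝ) ≤ 1.45 + L := by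
    have h1 : Real.log (c₁ : ℝ) ≤ Real.log (2.45 * Real.log n) :=
      Real.log_le_log (by linarith) hc₁le
    rw [Real.log_mul (by norm_num) hlogn_pos.ne'] at h1
    have h2 : Real.log (2.45 : ℝ) ≤ 1.45 := by
      have := Real.log_le_sub_one_of_pos (x := (2.45:ℝ)) (by norm_num)
      linarith
    rw [hLdef]
    linarith
  have hr2' : ((c₂ : ℝ) - 1) * 0.6931 ≤ 1.45 + L := by
    have := mul_le_mul_of_nonneg_left hlog2 (show (0:ℝ) ≤ (c₂:ℝ) - 1 by linarith)
    linarith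
  have hM : 2 * (M : ℝ) ≤ 1000 * L := by
    have hMc : (M : ℝ) = (c₂ : ℝ) + 1 := by exact_mod_cast rfl
    rw [hMc]
    nlinarith [hr2', hL, hc₂r]
  have hn0 : (0:ℝ) ≤ (n:ℝ) := by positivity
  have := mul_le_mul_of_nonneg_left hM hn0
  push_cast
  nlinarith [this]
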